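/- (Discrete-time first-order robust consensus.) Let N ≥ 1 and let α : ℕ → (Fin N → Fin N → ℝ) satisfy α[k] i j ≥ 0 for all k, i, j, take only finitely many distinct values, and satisfy: there exists M ∈ ℕ such that for every k ∈ ℕ there is an index i₀ such that every index j is reachable from i₀ under the reflexive–transitive closure of the relation E_k, where E_k(p,q) holds iff there exists l ∈ {k, k+1, …, k+M} with α[l] q p > 0. Let C_e > 0 and 0 < ρ < 1, and let ω : ℕ → (Fin N → ℝ) satisfy |ω[k] i| ≤ C_e ρ^k for all k and i. Let z : ℕ → (Fin N → ℝ) satisfy, for all k and all i, z[k+1] i = z[k] i + (1/(1 + ∑_j α[k] i j)) ∑_j α[k] i j (z[k] j − z[k] i) + ω[k] i. Then there exists z* ∈ ℝ such that lim_{k→∞} z[k] i = z* for every index i. -/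

import Mathlib

open Filter

open Finset
lemma aux_chain_split {X : Type*} (r : X → X → Prop) (P : X → Prop) (a b : X)
    (h : Relation.ReflTransGen r a b) (ha : P a) (hb : ¬ P b) :
    ∃ p q, P p ∧ ¬ P q ∧ r p q := by
  induction h with
  | refl => exact absurd ha hb
  | @tail b c hab hbc ih =>
    by_cases hPb : P b
    · exact ⟨b, c, hPb, hb, hbc⟩
    · exact ih hPb

lemma aux_geom (ρ : ℝ) (h0 : 0 ≤ ρ) (h1 : ρ < 1) (a b : ℕ) :
    ∑ s ∈ Finset.Ico a b, ρ ^ s ≤ ρ ^ a / (1 - ρ) := by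
  have h1ρ : 0 < 1 - ρ := by linarith
  rcases le_or_gt a b with hab | hab
  · obtain ⟨n, rfl⟩ := Nat.exists_eq_add_of_le hab
    rw [Finset.sum_Ico_eq_sum_range]
    simp only [Nat.add_sub_cancel_left]
    have : ∀ s ∈ Finset.range n, ρ ^ (a + s) = ρ ^ a * ρ ^ s := fun s _ => pow_add ρ a s
    rw [Finset.sum_congr rfl this, ← Finset.mul_sum]
    have hgs : ∑ s ∈ Finset.range n, ρ ^ s ≤ 1 / (1 - ρ) := by
      have hmul := geom_sum_mul ρ n
      rw [le_div_iff₀ h1ρ]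
      nlinarith [pow_nonneg h0 n]
    calc ρ ^ a * ∑ s ∈ Finset.range n, ρ ^ s ≤ ρ ^ a * (1 / (1 - ρ)) := by
          exact mul_le_mul_of_nonneg_left hgs (pow_nonneg h0 a)
      _ = ρ ^ a / (1 - ρ) := by ring
  · rw [Finset.Ico_eq_empty (by omega)]
    simp
    positivity

lemma aux_rec (d : ℕ → ℝ) (hd : ∀ r, 0 ≤ d r) (lam mu C : ℝ)
    (hl0 : 0 ≤ lam) (hl1 : lam < 1) (hm0 : 0 ≤ mu) (hm1 : mu < 1) (hC : 0 ≤ C)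
    (hrec : ∀ r, d (r + 1) ≤ lam * d r + C * mu ^ r) :
    Tendsto d atTop (nhds 0) := by
  rw [Metric.tendsto_atTop]
  intro ε hε
  have hε4 : 0 < ε / 4 := by linarith
  -- choose r₀ with C * mu ^ r ≤ (ε/4) * (1 - lam) for r ≥ r₀
  have hmu : Tendsto (fun r : ℕ => C * mu ^ r) atTop (nhds 0) := by
    simpa using (tendsto_pow_atTop_nhds_zero_of_lt_one hm0 hm1).const_mul C
  have h1l : 0 < 1 - lam := by linarith
  obtain ⟨r₀, hr₀⟩ := (Metric.tendsto_atTop.1 hmu (ε / 4 * (1 - lam)) (mul_pos hε4 h1l))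
  have key : ∀ s, d (r₀ + s) ≤ lam ^ s * d r₀ + ε / 4 := by
    intro s
    induction s with
    | zero => simp; nlinarith [hd r₀]
    | succ s ih =>
      have h2 := hrec (r₀ + s)
      have h3 : C * mu ^ (r₀ + s) ≤ ε / 4 * (1 - lam) := by
        have := hr₀ (r₀ + s) (by omega)
        rw [Real.dist_eq] at this
        have h4 : 0 ≤ C * mu ^ (r₀ + s) := mul_nonneg hC (pow_nonneg hm0 _)
        rw [abs_of_nonneg (by linarith)] at this
        linarith
      have : d (r₀ + (s + 1)) ≤ lam * d (r₀ + s) + ε / 4 * (1 - lam) := by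
        have : r₀ + (s + 1) = (r₀ + s) + 1 := by ring
        rw [this]; linarith
      calc d (r₀ + (s + 1)) ≤ lam * (lam ^ s * d r₀ + ε / 4) + ε / 4 * (1 - lam) := by
            nlinarith [ih, hd (r₀ + s)]
        _ = lam ^ (s + 1) * d r₀ + ε / 4 := by ring
  have hlam : Tendsto (fun s : ℕ => lam ^ s * d r₀) atTop (nhds 0) := by
    simpa using (tendsto_pow_atTop_nhds_zero_of_lt_one hl0 hl1).mul_const (d r₀)
  obtain ⟨s₀, hs₀⟩ := Metric.tendsto_atTop.1 hlam (ε / 4) hε4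
  refine ⟨r₀ + s₀, fun r hr => ?_⟩
  have : d r ≤ lam ^ (r - r₀) * d r₀ + ε / 4 := by
    have := key (r - r₀)
    rwa [Nat.add_sub_cancel' (by omega)] at this
  have h5 := hs₀ (r - r₀) (by omega)
  rw [Real.dist_eq] at h5 ⊢
  simp only [sub_zero] at h5 ⊢
  have h6 : 0 ≤ lam ^ (r - r₀) * d r₀ := mul_nonneg (pow_nonneg hl0 _) (hd r₀)
  rw [abs_of_nonneg h6] at h5
  rw [abs_of_nonneg (hd r)]
  linarith

lemma aux_step (N : ℕ) (α : ℕ → Fin N → Fin N → ℝ) (hα : ∀ k i j, 0 ≤ α k i j)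
    (γ : ℝ)
    (y η : ℕ → Fin N → ℝ)
    (hy : ∀ k i, y (k + 1) i = y k i +
      (1 / (1 + ∑ j, α k i j)) * ∑ j, α k i j * (y k j - y k i) + η k i)
    (t : ℕ) (i p : Fin N)
    (hw : γ ≤ (α t i p + if p = i then 1 else 0) / (1 + ∑ j, α t i j))
    (B c e : ℝ) (hc : 0 ≤ c) (hall : ∀ j, y t j ≤ B) (hp : y t p ≤ B - c)
    (he : η t i ≤ e) :
    y (t + 1) i ≤ B - γ * c + e := by
  have hS : 0 ≤ ∑ j, α t i j := Finset.sum_nonneg fun j _ => hα t i j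
  have h1S : (0:ℝ) < 1 + ∑ j, α t i j := by linarith
  have hnn : ∀ j : Fin N, (0:ℝ) ≤ α t i j + if j = i then 1 else 0 := by
    intro j
    have := hα t i j
    split <;> linarith
  have hid : y (t + 1) i =
      (∑ j, (α t i j + if j = i then 1 else 0) * y t j) / (1 + ∑ j, α t i j) + η t i := by
    rw [hy t i]
    have h1 : ∑ j, α t i j * (y t j - y t i)
        = (∑ j, α t i j * y t j) - (∑ j, α t i j) * y t i := by
      simp [mul_sub, Finset.sum_sub_distrib, Finset.sum_mul]
    have h2 : ∑ j, (α t i j + if j = i then 1 else 0) * y t j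
        = (∑ j, α t i j * y t j) + y t i := by
      simp [add_mul, Finset.sum_add_distrib, ite_mul, Finset.sum_ite_eq']
    rw [h1, h2]
    field_simp
    ring
  have hsum_n : ∑ j, (α t i j + if j = i then 1 else 0) = (∑ j, α t i j) + 1 := by
    rw [Finset.sum_add_distrib]
    simp
  have hbound : ∑ j, (α t i j + if j = i then 1 else 0) * y t j
      ≤ ((∑ j, α t i j) + 1) * B - (α t i p + if p = i then 1 else 0) * c := by
    have hterm : ∀ j ∈ (Finset.univ : Finset (Fin N)),
        (α t i j + if j = i then 1 else 0) * y t j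
        ≤ (α t i j + if j = i then 1 else 0) * B
          - if j = p then (α t i p + if p = i then 1 else 0) * c else 0 := by
      intro j _
      by_cases hj : j = p
      · subst hj
        simp only [if_pos rfl, if_true, eq_self_iff_true]
        nlinarith [mul_le_mul_of_nonneg_left hp (hnn j)]
      · simp only [if_neg hj, sub_zero]
        exact mul_le_mul_of_nonneg_left (hall j) (hnn j)
    calc ∑ j, (α t i j + if j = i then 1 else 0) * y t j
        ≤ ∑ j, ((α t i j + if j = i then 1 else 0) * B
            - if j = p then (α t i p + if p = i then 1 else 0) * c else 0) :=
          Finset.sum_le_sum hterm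
      _ = ((∑ j, α t i j) + 1) * B - (α t i p + if p = i then 1 else 0) * c := by
          rw [Finset.sum_sub_distrib, ← Finset.sum_mul, hsum_n]
          simp
  have hdiv : (∑ j, (α t i j + if j = i then 1 else 0) * y t j) / (1 + ∑ j, α t i j)
      ≤ B - ((α t i p + if p = i then 1 else 0) / (1 + ∑ j, α t i j)) * c := by
    rw [div_le_iff₀ h1S]
    have heq : (B - ((α t i p + if p = i then 1 else 0) / (1 + ∑ j, α t i j)) * c)
        * (1 + ∑ j, α t i j)
        = ((∑ j, α t i j) + 1) * B - (α t i p + if p = i then 1 else 0) * c := by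
      field_simp
      ring
    rw [heq]
    exact hbound
  have hγc : γ * c ≤ ((α t i p + if p = i then 1 else 0) / (1 + ∑ j, α t i j)) * c :=
    mul_le_mul_of_nonneg_right hw hc
  rw [hid]
  linarith

/-- **Lemma 3 (discrete-time first-order robust consensus).** For the discrete-time first-order
consensus dynamics `z[k+1]ᵢ = z[k]ᵢ + (1/(1+∑ⱼ αᵢⱼ[k])) ∑ⱼ αᵢⱼ[k](z[k]ⱼ − z[k]ᵢ) + ω[k]ᵢ` with
nonnegative weights taking finitely many values, a uniformly jointly quasi-strongly connected
(in the discrete-time sense) switching topology, and a geometrically vanishing disturbance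
`|ω[k]ᵢ| ≤ C_e ρ^k`, all states converge to a common limit. -/
theorem discrete_first_order_robust_consensus
    (N : ℕ) (hN : 1 ≤ N)
    (α : ℕ → Fin N → Fin N → ℝ)
    (hα : ∀ k i j, 0 ≤ α k i j)
    (hfin : (Set.range α).Finite)
    (hconn : ∃ M : ℕ, ∀ k : ℕ, ∃ i₀ : Fin N, ∀ j : Fin N,
      Relation.ReflTransGen
        (fun p q : Fin N => ∃ l : ℕ, k ≤ l ∧ l ≤ k + M ∧ 0 < α l q p) i₀ j)
    (Ce ρ : ℝ) (hCe : 0 < Ce) (hρ0 : 0 < ρ) (hρ1 : ρ < 1)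
    (ω : ℕ → Fin N → ℝ) (hω : ∀ k : ℕ, ∀ i : Fin N, |ω k i| ≤ Ce * ρ ^ k)
    (z : ℕ → Fin N → ℝ)
    (hz : ∀ k : ℕ, ∀ i : Fin N,
      z (k + 1) i = z k i +
        (1 / (1 + ∑ j, α k i j)) * ∑ j, α k i j * (z k j - z k i) + ω k i) :
    ∃ zstar : ℝ, ∀ i : Fin N, Tendsto (fun k => z k i) atTop (nhds zstar) := by
  classical
  obtain ⟨M, hM⟩ := hconn
  have hne : (Finset.univ : Finset (Fin N)).Nonempty := ⟨⟨0, by omega⟩, Finset.mem_univ _⟩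
  have h1ρ : (0:ℝ) < 1 - ρ := by linarith
  -- the uniform weight lower bound γ
  obtain ⟨γ, hγ0, hγ1, hw⟩ : ∃ γ : ℝ, 0 < γ ∧ γ ≤ 1 ∧ ∀ t : ℕ, ∀ i p : Fin N,
      (p = i ∨ 0 < α t i p) →
      γ ≤ (α t i p + if p = i then 1 else 0) / (1 + ∑ j, α t i j) := by
    set F := hfin.toFinset with hF
    have hrange : ∀ k, α k ∈ F := fun k => hfin.mem_toFinset.2 ⟨k, rfl⟩
    set Vals : Finset ℝ := F.biUnion
      (fun f => (Finset.univ : Finset (Fin N × Fin N)).image (fun q => f q.1 q.2)) with hVals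
    have hmemV : ∀ k i j, α k i j ∈ Vals := by
      intro k i j
      exact Finset.mem_biUnion.2 ⟨α k, hrange k,
        Finset.mem_image.2 ⟨(i, j), Finset.mem_univ _, rfl⟩⟩
    set i0 : Fin N := ⟨0, by omega⟩ with hi0
    have hValsne : Vals.Nonempty := ⟨α 0 i0 i0, hmemV 0 i0 i0⟩
    set amax := Vals.max' hValsne with hamax
    have hαmax : ∀ k i j, α k i j ≤ amax := fun k i j => Finset.le_max' _ _ (hmemV k i j)
    have hamax0 : 0 ≤ amax := le_trans (hα 0 i0 i0) (hαmax 0 i0 i0)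
    set P : Finset ℝ := insert (1:ℝ) (Vals.filter (fun x => 0 < x)) with hP
    set amin := P.min' ⟨1, Finset.mem_insert_self _ _⟩ with hamin
    have hamin1 : amin ≤ 1 := Finset.min'_le _ _ (Finset.mem_insert_self _ _)
    have hamin0 : 0 < amin := by
      have hmem := Finset.min'_mem P ⟨1, Finset.mem_insert_self _ _⟩
      rw [← hamin] at hmem
      rcases Finset.mem_insert.1 hmem with h | h
      · rw [h]; norm_num
      · exact (Finset.mem_filter.1 h).2
    have haminle : ∀ k i j, 0 < α k i j → amin ≤ α k i j := fun k i j h =>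
      Finset.min'_le _ _ (Finset.mem_insert_of_mem (Finset.mem_filter.2 ⟨hmemV k i j, h⟩))
    have hden : (0:ℝ) < 1 + N * amax := by positivity
    refine ⟨amin / (1 + N * amax), by positivity, ?_, ?_⟩
    · rw [div_le_one hden]
      have : (0:ℝ) ≤ (N:ℝ) * amax := by positivity
      linarith
    · intro t i p hip
      have hS : ∑ j, α t i j ≤ N * amax := by
        calc ∑ j, α t i j ≤ ∑ _j : Fin N, amax := Finset.sum_le_sum fun j _ => hαmax t i j
          _ = N * amax := by simp [Finset.sum_const, Finset.card_univ, nsmul_eq_mul]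
      have hS0 : 0 ≤ ∑ j, α t i j := Finset.sum_nonneg fun j _ => hα t i j
      have hnum : amin ≤ α t i p + if p = i then 1 else 0 := by
        rcases hip with h | h
        · rw [if_pos h]
          have := hα t i p
          linarith
        · have h1 := haminle t i p h
          split <;> linarith
      exact div_le_div₀ (by linarith [hα t i p] : (0:ℝ) ≤ α t i p + if p = i then 1 else 0)
        hnum (by linarith) (by linarith)
  -- the accumulated-disturbance function W
  obtain ⟨W, hW0, hWle, hWsucc, hWself⟩ : ∃ W : ℕ → ℕ → ℝ,
      (∀ a t, 0 ≤ W a t) ∧ (∀ a t, W a t ≤ Ce / (1 - ρ) * ρ ^ a) ∧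
      (∀ a t, a ≤ t → W a (t + 1) = W a t + Ce * ρ ^ t) ∧ (∀ a, W a a = 0) := by
    refine ⟨fun a t => ∑ s ∈ Finset.Ico a t, Ce * ρ ^ s, ?_, ?_, ?_, ?_⟩
    · intro a t; exact Finset.sum_nonneg fun s _ => by positivity
    · intro a t
      show (∑ s ∈ Finset.Ico a t, Ce * ρ ^ s) ≤ _
      rw [← Finset.mul_sum]
      calc Ce * ∑ s ∈ Finset.Ico a t, ρ ^ s ≤ Ce * (ρ ^ a / (1 - ρ)) :=
            mul_le_mul_of_nonneg_left (aux_geom ρ hρ0.le hρ1 a t) hCe.le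
        _ = Ce / (1 - ρ) * ρ ^ a := by ring
    · intro a t h; exact Finset.sum_Ico_succ_top h _
    · intro a; simp
  -- one-sided machinery, applicable to z and to -z
  have SYS : ∀ y η : ℕ → Fin N → ℝ,
      (∀ k i, y (k + 1) i = y k i +
        (1 / (1 + ∑ j, α k i j)) * ∑ j, α k i j * (y k j - y k i) + η k i) →
      (∀ k i, |η k i| ≤ Ce * ρ ^ k) →
      ∀ (k₀ : ℕ) (B c₀ : ℝ), 0 ≤ c₀ → (∀ j, y k₀ j ≤ B) →
      ((∀ t, k₀ ≤ t → ∀ j, y t j ≤ B + W k₀ t) ∧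
       (∀ t t', k₀ ≤ t → t ≤ t' → ∀ i, y t i ≤ B + W k₀ t - γ ^ (t - k₀) * c₀ →
          y t' i ≤ B + W k₀ t' - γ ^ (t' - k₀) * c₀) ∧
       (∀ t, k₀ ≤ t → ∀ i₀ j₁ : Fin N,
          (∀ j, Relation.ReflTransGen
            (fun p q : Fin N => ∃ l : ℕ, t ≤ l ∧ l ≤ t + M ∧ 0 < α l q p) i₀ j) →
          y t i₀ ≤ B + W k₀ t - γ ^ (t - k₀) * c₀ →
          ¬ (y t j₁ ≤ B + W k₀ t - γ ^ (t - k₀) * c₀) →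
          ∃ q : Fin N, ¬ (y t q ≤ B + W k₀ t - γ ^ (t - k₀) * c₀) ∧
            y (t + (M + 1)) q ≤ B + W k₀ (t + (M + 1)) - γ ^ (t + (M + 1) - k₀) * c₀)) := by
    intro y η hy hη k₀ B c₀ hc₀ hB
    have bound : ∀ t, k₀ ≤ t → ∀ j, y t j ≤ B + W k₀ t := by
      intro t ht
      induction t, ht using Nat.le_induction with
      | base => intro j; rw [hWself]; simpa using hB j
      | succ t ht ih =>
        intro j
        have hst := aux_step N α hα γ y η hy t j j (hw t j j (Or.inl rfl))
          (B + W k₀ t) 0 (Ce * ρ ^ t) le_rfl ih (by simpa using ih j)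
          ((abs_le.1 (hη t j)).2)
        rw [hWsucc k₀ t ht]
        simp only [mul_zero, sub_zero] at hst
        linarith
    have pers1 : ∀ t, k₀ ≤ t → ∀ i, y t i ≤ B + W k₀ t - γ ^ (t - k₀) * c₀ →
        y (t + 1) i ≤ B + W k₀ (t + 1) - γ ^ (t + 1 - k₀) * c₀ := by
      intro t ht i hi
      have hst := aux_step N α hα γ y η hy t i i (hw t i i (Or.inl rfl))
        (B + W k₀ t) (γ ^ (t - k₀) * c₀) (Ce * ρ ^ t)
        (mul_nonneg (pow_nonneg hγ0.le _) hc₀) (bound t ht) hi ((abs_le.1 (hη t i)).2)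
      have hexp : t + 1 - k₀ = (t - k₀) + 1 := by omega
      rw [hWsucc k₀ t ht, hexp, pow_succ]
      have : γ * (γ ^ (t - k₀) * c₀) = γ ^ (t - k₀) * γ * c₀ := by ring
      linarith
    have pers : ∀ t t', k₀ ≤ t → t ≤ t' → ∀ i, y t i ≤ B + W k₀ t - γ ^ (t - k₀) * c₀ →
        y t' i ≤ B + W k₀ t' - γ ^ (t' - k₀) * c₀ := by
      intro t t' ht htt' i hi
      induction t', htt' using Nat.le_induction with
      | base => exact hi
      | succ t' h ih => exact pers1 t' (ht.trans h) i ih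
    refine ⟨bound, pers, ?_⟩
    intro t ht i₀ j₁ hreach hroot hj₁
    obtain ⟨p, q, hp, hq, l, hl1, hl2, hl3⟩ :=
      aux_chain_split _ (fun x => y t x ≤ B + W k₀ t - γ ^ (t - k₀) * c₀) i₀ j₁
        (hreach j₁) hroot hj₁
    have hkl : k₀ ≤ l := ht.trans hl1
    have hpl : y l p ≤ B + W k₀ l - γ ^ (l - k₀) * c₀ := pers t l ht hl1 p hp
    have hst := aux_step N α hα γ y η hy l q p (hw l q p (Or.inr hl3))
      (B + W k₀ l) (γ ^ (l - k₀) * c₀) (Ce * ρ ^ l)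
      (mul_nonneg (pow_nonneg hγ0.le _) hc₀) (bound l hkl) hpl ((abs_le.1 (hη l q)).2)
    have hq1 : y (l + 1) q ≤ B + W k₀ (l + 1) - γ ^ (l + 1 - k₀) * c₀ := by
      have hexp : l + 1 - k₀ = (l - k₀) + 1 := by omega
      rw [hWsucc k₀ l hkl, hexp, pow_succ]
      have : γ * (γ ^ (l - k₀) * c₀) = γ ^ (l - k₀) * γ * c₀ := by ring
      linarith
    exact ⟨q, hq, pers (l + 1) (t + (M + 1)) (by omega) (by omega) q hq1⟩
  -- the recurrence for -z
  set zn : ℕ → Fin N → ℝ := fun k i => -(z k i) with hzn_def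
  set ωn : ℕ → Fin N → ℝ := fun k i => -(ω k i) with hωn_def
  have hzn : ∀ k i, zn (k + 1) i = zn k i +
      (1 / (1 + ∑ j, α k i j)) * ∑ j, α k i j * (zn k j - zn k i) + ωn k i := by
    intro k i
    show -(z (k + 1) i) = -(z k i) +
      (1 / (1 + ∑ j, α k i j)) * ∑ j, α k i j * (-(z k j) - -(z k i)) + -(ω k i)
    rw [hz k i,
      show (∑ j, α k i j * (-(z k j) - -(z k i))) = -∑ j, α k i j * (z k j - z k i) by
        rw [← Finset.sum_neg_distrib]; exact Finset.sum_congr rfl fun j _ => by ring]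
    ring
  have hωn : ∀ k i, |ωn k i| ≤ Ce * ρ ^ k := by
    intro k i; show |-(ω k i)| ≤ _; rw [abs_neg]; exact hω k i
  -- max, min, spread
  set Vv : ℕ → ℝ := fun k => Finset.univ.sup' hne (z k) with hVv
  set Iv : ℕ → ℝ := fun k => Finset.univ.inf' hne (z k) with hIv
  have hIle : ∀ k i, Iv k ≤ z k i := fun k i => Finset.inf'_le (z k) (Finset.mem_univ i)
  have hVle : ∀ k i, z k i ≤ Vv k := fun k i => Finset.le_sup' (z k) (Finset.mem_univ i)
  have hD0 : ∀ k, 0 ≤ Vv k - Iv k := fun k =>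
    sub_nonneg.2 ((hIle k ⟨0, by omega⟩).trans (hVle k ⟨0, by omega⟩))
  have hBz : ∀ k₀ j, z k₀ j ≤ Vv k₀ := fun k₀ j => hVle k₀ j
  have hBzn : ∀ k₀ j, zn k₀ j ≤ -(Iv k₀) := fun k₀ j => neg_le_neg (hIle k₀ j)
  -- per-window contraction
  have contra : ∀ k₀ : ℕ, Vv (k₀ + N * (M + 1)) - Iv (k₀ + N * (M + 1)) ≤
      (1 - γ ^ (N * (M + 1)) / 2) * (Vv k₀ - Iv k₀) + (2 * (Ce / (1 - ρ))) * ρ ^ k₀ := by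
    intro k₀
    obtain ⟨bndL, persL, growL⟩ := SYS z ω hz hω k₀ (Vv k₀) ((Vv k₀ - Iv k₀) / 2)
      (by linarith [hD0 k₀]) (hBz k₀)
    obtain ⟨bndH, persH, growH⟩ := SYS zn ωn hzn hωn k₀ (-(Iv k₀)) ((Vv k₀ - Iv k₀) / 2)
      (by linarith [hD0 k₀]) (hBzn k₀)
    have cover : ∀ t, k₀ ≤ t → ∀ i : Fin N,
        z t i ≤ Vv k₀ + W k₀ t - γ ^ (t - k₀) * ((Vv k₀ - Iv k₀) / 2) ∨
        zn t i ≤ -(Iv k₀) + W k₀ t - γ ^ (t - k₀) * ((Vv k₀ - Iv k₀) / 2) := by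
      intro t ht i
      by_cases h : z t i ≤ Vv k₀ + W k₀ t - γ ^ (t - k₀) * ((Vv k₀ - Iv k₀) / 2)
      · exact Or.inl h
      · right
        push_neg at h
        have h1 : γ ^ (t - k₀) ≤ 1 := pow_le_one₀ hγ0.le hγ1
        have h2 : 0 ≤ W k₀ t := hW0 k₀ t
        have h3 : γ ^ (t - k₀) * ((Vv k₀ - Iv k₀) / 2) ≤ (Vv k₀ - Iv k₀) / 2 :=
          mul_le_of_le_one_left (by linarith [hD0 k₀]) h1
        show -(z t i) ≤ _
        linarith
    -- tagged finsets
    set Lf : ℕ → Finset (Fin N) := fun r => Finset.univ.filter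
      (fun i => z (k₀ + r * (M + 1)) i ≤ Vv k₀ + W k₀ (k₀ + r * (M + 1)) -
        γ ^ ((k₀ + r * (M + 1)) - k₀) * ((Vv k₀ - Iv k₀) / 2)) with hLf
    set Hf : ℕ → Finset (Fin N) := fun r => Finset.univ.filter
      (fun i => zn (k₀ + r * (M + 1)) i ≤ -(Iv k₀) + W k₀ (k₀ + r * (M + 1)) -
        γ ^ ((k₀ + r * (M + 1)) - k₀) * ((Vv k₀ - Iv k₀) / 2)) with hHf
    have hkt : ∀ r : ℕ, k₀ ≤ k₀ + r * (M + 1) := fun r => Nat.le_add_right _ _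
    have htstep : ∀ r : ℕ, k₀ + (r + 1) * (M + 1) = (k₀ + r * (M + 1)) + (M + 1) := by
      intro r; ring
    have hLsub : ∀ r, Lf r ⊆ Lf (r + 1) := by
      intro r i hi
      rw [hLf] at hi ⊢
      rw [Finset.mem_filter] at hi ⊢
      refine ⟨Finset.mem_univ _, ?_⟩
      rw [htstep r]
      exact persL _ _ (hkt r) (by omega) i hi.2
    have hHsub : ∀ r, Hf r ⊆ Hf (r + 1) := by
      intro r i hi
      rw [hHf] at hi ⊢
      rw [Finset.mem_filter] at hi ⊢
      refine ⟨Finset.mem_univ _, ?_⟩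
      rw [htstep r]
      exact persH _ _ (hkt r) (by omega) i hi.2
    have count : ∀ r : ℕ, Lf r = Finset.univ ∨ Hf r = Finset.univ ∨
        N + r ≤ (Lf r).card + (Hf r).card := by
      intro r
      induction r with
      | zero =>
        right; right
        have hcov : (Finset.univ : Finset (Fin N)) ⊆ Lf 0 ∪ Hf 0 := by
          intro i _
          rcases cover k₀ le_rfl i with h | h
          · apply Finset.mem_union_left
            rw [hLf, Finset.mem_filter]
            exact ⟨Finset.mem_univ _, by simpa using h⟩
          · apply Finset.mem_union_right
            rw [hHf, Finset.mem_filter]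
            exact ⟨Finset.mem_univ _, by simpa using h⟩
        calc N + 0 = (Finset.univ : Finset (Fin N)).card := by
              simp [Finset.card_univ]
          _ ≤ (Lf 0 ∪ Hf 0).card := Finset.card_le_card hcov
          _ ≤ (Lf 0).card + (Hf 0).card := Finset.card_union_le _ _
      | succ r ih =>
        by_cases hLu : Lf r = Finset.univ
        · left
          exact Finset.univ_subset_iff.1 (hLu ▸ hLsub r)
        by_cases hHu : Hf r = Finset.univ
        · right; left
          exact Finset.univ_subset_iff.1 (hHu ▸ hHsub r)
        rcases ih with h | h | h
        · exact absurd h hLu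
        · exact absurd h hHu
        right; right
        -- both non-full: find a new tagged vertex
        obtain ⟨jL, _, hjL⟩ := Finset.exists_of_ssubset
          (Finset.ssubset_univ_iff.2 hLu)
        obtain ⟨jH, _, hjH⟩ := Finset.exists_of_ssubset
          (Finset.ssubset_univ_iff.2 hHu)
        have hjL' : ¬ (z (k₀ + r * (M + 1)) jL ≤ Vv k₀ + W k₀ (k₀ + r * (M + 1)) -
            γ ^ ((k₀ + r * (M + 1)) - k₀) * ((Vv k₀ - Iv k₀) / 2)) := by
          intro hcon
          exact hjL (by rw [hLf, Finset.mem_filter]; exact ⟨Finset.mem_univ _, hcon⟩)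
        have hjH' : ¬ (zn (k₀ + r * (M + 1)) jH ≤ -(Iv k₀) + W k₀ (k₀ + r * (M + 1)) -
            γ ^ ((k₀ + r * (M + 1)) - k₀) * ((Vv k₀ - Iv k₀) / 2)) := by
          intro hcon
          exact hjH (by rw [hHf, Finset.mem_filter]; exact ⟨Finset.mem_univ _, hcon⟩)
        obtain ⟨i₀, hi₀⟩ := hM (k₀ + r * (M + 1))
        rcases cover (k₀ + r * (M + 1)) (hkt r) i₀ with hroot | hroot
        · -- L grows
          obtain ⟨q, hq1, hq2⟩ := growL (k₀ + r * (M + 1)) (hkt r) i₀ jL hi₀ hroot hjL'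
          have hqmem : q ∈ Lf (r + 1) := by
            rw [hLf, Finset.mem_filter]
            refine ⟨Finset.mem_univ _, ?_⟩
            rw [htstep r]
            exact hq2
          have hqnot : q ∉ Lf r := by
            rw [hLf, Finset.mem_filter]
            intro hcon
            exact hq1 hcon.2
          have hcard : (Lf r).card < (Lf (r + 1)).card :=
            Finset.card_lt_card ⟨hLsub r, fun hsub => hqnot (hsub hqmem)⟩
          have hcard2 : (Hf r).card ≤ (Hf (r + 1)).card := Finset.card_le_card (hHsub r)
          omega
        · -- H grows
          obtain ⟨q, hq1, hq2⟩ := growH (k₀ + r * (M + 1)) (hkt r) i₀ jH hi₀ hroot hjH'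
          have hqmem : q ∈ Hf (r + 1) := by
            rw [hHf, Finset.mem_filter]
            refine ⟨Finset.mem_univ _, ?_⟩
            rw [htstep r]
            exact hq2
          have hqnot : q ∉ Hf r := by
            rw [hHf, Finset.mem_filter]
            intro hcon
            exact hq1 hcon.2
          have hcard : (Hf r).card < (Hf (r + 1)).card :=
            Finset.card_lt_card ⟨hHsub r, fun hsub => hqnot (hsub hqmem)⟩
          have hcard2 : (Lf r).card ≤ (Lf (r + 1)).card := Finset.card_le_card (hLsub r)
          omega
    -- at r = N one of them is full
    have hfull : Lf N = Finset.univ ∨ Hf N = Finset.univ := by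
      rcases count N with h | h | h
      · exact Or.inl h
      · exact Or.inr h
      · have h1 : (Lf N).card ≤ N := by
          calc (Lf N).card ≤ (Finset.univ : Finset (Fin N)).card := Finset.card_le_univ _
            _ = N := by simp [Finset.card_univ]
        have h2 : (Hf N).card ≤ N := by
          calc (Hf N).card ≤ (Finset.univ : Finset (Fin N)).card := Finset.card_le_univ _
            _ = N := by simp [Finset.card_univ]
        left
        apply Finset.eq_univ_of_card
        simp only [Fintype.card_fin]
        omega
    have hexpT : (k₀ + N * (M + 1)) - k₀ = N * (M + 1) := by omega
    have hWb : W k₀ (k₀ + N * (M + 1)) ≤ Ce / (1 - ρ) * ρ ^ k₀ := hWle _ _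
    have hWnn : 0 ≤ W k₀ (k₀ + N * (M + 1)) := hW0 _ _
    rcases hfull with hfl | hfl
    · -- L full : max came down
      have h1 : ∀ i : Fin N, z (k₀ + N * (M + 1)) i ≤ Vv k₀ + W k₀ (k₀ + N * (M + 1)) -
          γ ^ (N * (M + 1)) * ((Vv k₀ - Iv k₀) / 2) := by
        intro i
        have : i ∈ Lf N := hfl ▸ Finset.mem_univ i
        rw [hLf, Finset.mem_filter] at this
        have h2 := this.2
        rw [hexpT] at h2
        exact h2
      have hsup : Vv (k₀ + N * (M + 1)) ≤ Vv k₀ + W k₀ (k₀ + N * (M + 1)) -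
          γ ^ (N * (M + 1)) * ((Vv k₀ - Iv k₀) / 2) :=
        Finset.sup'_le _ _ fun i _ => h1 i
      have hinf : Iv k₀ - W k₀ (k₀ + N * (M + 1)) ≤ Iv (k₀ + N * (M + 1)) := by
        apply Finset.le_inf'
        intro i _
        have := bndH (k₀ + N * (M + 1)) (Nat.le_add_right _ _) i
        have h2 : -(z (k₀ + N * (M + 1)) i) ≤ -(Iv k₀) + W k₀ (k₀ + N * (M + 1)) := this
        linarith
      linarith
    · -- H full : min came up
      have h1 : ∀ i : Fin N, Iv k₀ - W k₀ (k₀ + N * (M + 1)) +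
          γ ^ (N * (M + 1)) * ((Vv k₀ - Iv k₀) / 2) ≤ z (k₀ + N * (M + 1)) i := by
        intro i
        have : i ∈ Hf N := hfl ▸ Finset.mem_univ i
        rw [hHf, Finset.mem_filter] at this
        have h2 := this.2
        rw [hexpT] at h2
        have h3 : -(z (k₀ + N * (M + 1)) i) ≤ -(Iv k₀) + W k₀ (k₀ + N * (M + 1)) -
            γ ^ (N * (M + 1)) * ((Vv k₀ - Iv k₀) / 2) := h2
        linarith
      have hinf : Iv k₀ - W k₀ (k₀ + N * (M + 1)) +
          γ ^ (N * (M + 1)) * ((Vv k₀ - Iv k₀) / 2) ≤ Iv (k₀ + N * (M + 1)) :=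
        Finset.le_inf' _ _ fun i _ => h1 i
      have hsup : Vv (k₀ + N * (M + 1)) ≤ Vv k₀ + W k₀ (k₀ + N * (M + 1)) :=
        Finset.sup'_le _ _ fun i _ => bndL (k₀ + N * (M + 1)) (Nat.le_add_right _ _) i
      linarith
  -- drift bound over arbitrary spans
  have drift : ∀ a s : ℕ, Vv (a + s) - Iv (a + s) ≤ Vv a - Iv a +
      2 * (Ce / (1 - ρ)) * ρ ^ a := by
    intro a s
    obtain ⟨bndL, -, -⟩ := SYS z ω hz hω a (Vv a) 0 le_rfl (hBz a)
    obtain ⟨bndH, -, -⟩ := SYS zn ωn hzn hωn a (-(Iv a)) 0 le_rfl (hBzn a)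
    have h1 : Vv (a + s) ≤ Vv a + W a (a + s) :=
      Finset.sup'_le _ _ fun i _ => bndL (a + s) (Nat.le_add_right _ _) i
    have h2 : Iv a - W a (a + s) ≤ Iv (a + s) := by
      apply Finset.le_inf'
      intro i _
      have h3 : -(z (a + s) i) ≤ -(Iv a) + W a (a + s) := bndH (a + s) (Nat.le_add_right _ _) i
      linarith
    have h4 := hWle a (a + s)
    linarith
  -- convergence of the spread to zero
  set T : ℕ := N * (M + 1) with hT
  have hTpos : 0 < T := by positivity
  have hγT1 : γ ^ T ≤ 1 := pow_le_one₀ hγ0.le hγ1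
  have hγT0 : 0 < γ ^ T := pow_pos hγ0 T
  have hρT1 : ρ ^ T < 1 := pow_lt_one₀ hρ0.le hρ1 hTpos.ne'
  have hρT0 : 0 ≤ ρ ^ T := pow_nonneg hρ0.le T
  have hd0 : Tendsto (fun r : ℕ => Vv (r * T) - Iv (r * T)) atTop (nhds 0) := by
    apply aux_rec _ (fun r => hD0 (r * T)) (1 - γ ^ T / 2) (ρ ^ T) (2 * (Ce / (1 - ρ)))
      (by linarith) (by linarith) hρT0 hρT1 (by positivity)
    intro r
    have h1 : (r + 1) * T = r * T + T := by ring
    have h2 := contra (r * T)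
    rw [h1]
    calc Vv (r * T + T) - Iv (r * T + T)
        ≤ (1 - γ ^ T / 2) * (Vv (r * T) - Iv (r * T)) + 2 * (Ce / (1 - ρ)) * ρ ^ (r * T) := h2
      _ = (1 - γ ^ T / 2) * (Vv (r * T) - Iv (r * T)) + 2 * (Ce / (1 - ρ)) * (ρ ^ T) ^ r := by
          rw [mul_comm r T, pow_mul ρ T r]
  have hdivT : Tendsto (fun k : ℕ => k / T) atTop atTop := by
    apply tendsto_atTop_atTop.2
    intro b
    exact ⟨b * T, fun k hk => (Nat.le_div_iff_mul_le hTpos).2 hk⟩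
  have hDbound : ∀ k : ℕ, Vv k - Iv k ≤ (Vv (k / T * T) - Iv (k / T * T)) +
      2 * (Ce / (1 - ρ)) * (ρ ^ T) ^ (k / T) := by
    intro k
    have h1 : k / T * T + k % T = k := Nat.div_add_mod' k T
    have h2 := drift (k / T * T) (k % T)
    rw [h1] at h2
    calc Vv k - Iv k ≤ Vv (k / T * T) - Iv (k / T * T) +
          2 * (Ce / (1 - ρ)) * ρ ^ (k / T * T) := h2
      _ = Vv (k / T * T) - Iv (k / T * T) + 2 * (Ce / (1 - ρ)) * (ρ ^ T) ^ (k / T) := by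
          rw [mul_comm (k / T) T, pow_mul ρ T (k / T)]
  have hcomp : Tendsto (fun k : ℕ => (Vv (k / T * T) - Iv (k / T * T)) +
      2 * (Ce / (1 - ρ)) * (ρ ^ T) ^ (k / T)) atTop (nhds 0) := by
    have ha : Tendsto (fun k : ℕ => Vv (k / T * T) - Iv (k / T * T)) atTop (nhds 0) :=
      hd0.comp hdivT
    have hb : Tendsto (fun k : ℕ => 2 * (Ce / (1 - ρ)) * (ρ ^ T) ^ (k / T)) atTop (nhds 0) := by
      have := ((tendsto_pow_atTop_nhds_zero_of_lt_one hρT0 hρT1).const_mul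
        (2 * (Ce / (1 - ρ)))).comp hdivT
      rw [mul_zero] at this
      exact this
    simpa using ha.add hb
  have hDto0 : Tendsto (fun k => Vv k - Iv k) atTop (nhds 0) :=
    squeeze_zero hD0 hDbound hcomp
  -- convergence of the max
  have hVstep : ∀ k, Vv (k + 1) ≤ Vv k + Ce * ρ ^ k := by
    intro k
    obtain ⟨bndL, -, -⟩ := SYS z ω hz hω k (Vv k) 0 le_rfl (hBz k)
    have h1 : Vv (k + 1) ≤ Vv k + W k (k + 1) :=
      Finset.sup'_le _ _ fun i _ => bndL (k + 1) (Nat.le_succ k) i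
    have h2 : W k (k + 1) = Ce * ρ ^ k := by
      rw [hWsucc k k le_rfl, hWself]; ring
    linarith
  have hIlow : ∀ k, Iv 0 - Ce / (1 - ρ) ≤ Iv k := by
    intro k
    obtain ⟨bndH, -, -⟩ := SYS zn ωn hzn hωn 0 (-(Iv 0)) 0 le_rfl (hBzn 0)
    apply Finset.le_inf'
    intro i _
    have h1 : -(z k i) ≤ -(Iv 0) + W 0 k := bndH k (Nat.zero_le k) i
    have h2 := hWle 0 k
    simp only [pow_zero, mul_one] at h2
    linarith
  have hganti : Antitone (fun k => Vv k + Ce / (1 - ρ) * ρ ^ k) := by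
    apply antitone_nat_of_succ_le
    intro k
    have h1 := hVstep k
    have h2 : Ce / (1 - ρ) * ρ ^ (k + 1) = Ce / (1 - ρ) * ρ ^ k * ρ := by rw [pow_succ]; ring
    have h3 : Ce / (1 - ρ) * (1 - ρ) = Ce := by field_simp
    have h4 : 0 ≤ ρ ^ k := pow_nonneg hρ0.le k
    show Vv (k + 1) + Ce / (1 - ρ) * ρ ^ (k + 1) ≤ Vv k + Ce / (1 - ρ) * ρ ^ k
    nlinarith [mul_nonneg (le_of_lt (div_pos hCe h1ρ)) h4]
  have hgbdd : BddBelow (Set.range fun k => Vv k + Ce / (1 - ρ) * ρ ^ k) := by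
    refine ⟨Iv 0 - Ce / (1 - ρ), ?_⟩
    rintro x ⟨k, rfl⟩
    have h1 := hIlow k
    have h2 : Iv k ≤ Vv k := by linarith [hD0 k]
    have h3 : 0 ≤ Ce / (1 - ρ) * ρ ^ k := by positivity
    linarith
  have hgl := tendsto_atTop_ciInf hganti hgbdd
  refine ⟨⨅ k, (Vv k + Ce / (1 - ρ) * ρ ^ k), ?_⟩
  have hVlim : Tendsto Vv atTop (nhds (⨅ k, (Vv k + Ce / (1 - ρ) * ρ ^ k))) := by
    have hb : Tendsto (fun k : ℕ => Ce / (1 - ρ) * ρ ^ k) atTop (nhds 0) := by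
      simpa using (tendsto_pow_atTop_nhds_zero_of_lt_one hρ0.le hρ1).const_mul (Ce / (1 - ρ))
    have := hgl.sub hb
    simpa using this
  have hIlim : Tendsto Iv atTop (nhds (⨅ k, (Vv k + Ce / (1 - ρ) * ρ ^ k))) := by
    have := hVlim.sub hDto0
    simp only [sub_zero] at this
    have heq : (fun k => Vv k - (Vv k - Iv k)) = Iv := by funext k; ring
    rwa [heq] at this
  intro i
  exact tendsto_of_tendsto_of_tendsto_of_le_of_le hIlim hVlim
    (fun k => hIle k i) (fun k => hVle k i)
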